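/- Let H be a Hermitian matrix and let S(δ) be a unitary-valued function with ‖exp(-iδH) - S(δ)‖ ≤ C·δ^{p+1} for all δ ∈ [0, δ₀], where ‖·‖ is the operator norm. Write S(δ) = exp(-iδ H̃(δ)) for an effective Hermitian H̃(δ) (with spectrum in (-π/δ, π/δ]). Then the smallest eigenvalues satisfy |λ_min(H) - λ_min(H̃(δ))| ≤ C'·δ^p for a constant C' depending only on C, provided δ is sufficiently small that the spectral ranges avoid wraparound. -/

import Mathlib

set_option maxHeartbeats 1000000


open Matrix
open scoped Matrix.Norms.L2Operator

namespace TrotterAux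

variable {m : Type*} [Fintype m] [DecidableEq m]

noncomputable def T : Matrix m m ℂ ≃⋆ₐ[ℂ] (EuclideanSpace ℂ m →L[ℂ] EuclideanSpace ℂ m) :=
  Matrix.toEuclideanCLM (𝕜 := ℂ)

lemma T_norm (A : Matrix m m ℂ) : ‖A‖ = ‖T A‖ :=
  Matrix.cstar_norm_def A

lemma T_mem_unitary {U : Matrix m m ℂ} (hU : U ∈ Matrix.unitaryGroup m ℂ) :
    (T U) ∈ unitary (EuclideanSpace ℂ m →L[ℂ] EuclideanSpace ℂ m) := by
  refine Unitary.mem_iff.mpr ⟨?_, ?_⟩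
  · rw [← StarHomClass.map_star, ← _root_.map_mul, Matrix.mem_unitaryGroup_iff'.mp hU, _root_.map_one]
  · rw [← StarHomClass.map_star, ← _root_.map_mul, Matrix.mem_unitaryGroup_iff.mp hU, _root_.map_one]

lemma T_norm_map {U : Matrix m m ℂ} (hU : U ∈ Matrix.unitaryGroup m ℂ)
    (x : EuclideanSpace ℂ m) : ‖T U x‖ = ‖x‖ :=
  ContinuousLinearMap.norm_map_of_mem_unitary (T_mem_unitary hU) x

/-- Phase matching: every diagonal entry of one conjugated-diagonal matrix is close to
some diagonal entry of another, within the operator-norm distance. -/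
lemma phase_match [Nonempty m] {U V : Matrix m m ℂ} (hU : U ∈ Matrix.unitaryGroup m ℂ)
    (hV : V ∈ Matrix.unitaryGroup m ℂ) (d e : m → ℂ) (i : m) :
    ∃ j, ‖d i - e j‖ ≤
      ‖U * Matrix.diagonal d * star U - V * Matrix.diagonal e * star V‖ := by
  classical
  obtain ⟨j₀, -, hj₀⟩ := Finset.exists_min_image Finset.univ
    (fun j => ‖d i - e j‖) ⟨Classical.arbitrary m, Finset.mem_univ _⟩
  refine ⟨j₀, ?_⟩
  set X := U * Matrix.diagonal d * star U with hX
  set Y := V * Matrix.diagonal e * star V with hY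
  set s : EuclideanSpace ℂ m := EuclideanSpace.single i 1 with hs
  set v : EuclideanSpace ℂ m := T U s with hv
  set w : EuclideanSpace ℂ m := T (star V) v with hw
  have hsv : ‖v‖ = 1 := by
    rw [hv, T_norm_map hU, hs, EuclideanSpace.norm_single, norm_one]
  have hwv : ‖w‖ = 1 := by
    rw [hw, T_norm_map (Unitary.star_mem hV), hsv]
  have hvw : v = T V w := by
    rw [hw, ← ContinuousLinearMap.mul_apply, ← _root_.map_mul,
      Matrix.mem_unitaryGroup_iff.mp hV, _root_.map_one, ContinuousLinearMap.one_apply]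
  have hdiag : T (Matrix.diagonal d) s = d i • s := by
    have h1 : T (Matrix.diagonal d) (WithLp.toLp 2 (Pi.single i 1)) =
        WithLp.toLp 2 (Matrix.diagonal d *ᵥ Pi.single i 1) :=
      Matrix.toEuclideanCLM_toLp _ _
    rw [hs, ← EuclideanSpace.toLp_single, h1, Matrix.diagonal_mulVec_single, mul_one]
    ext j
    simp [EuclideanSpace.single_apply, Pi.single_apply]
  have hXU : X * U = U * Matrix.diagonal d := by
    rw [hX, mul_assoc, Matrix.mem_unitaryGroup_iff'.mp hU, mul_one]
  have hYV : Y * V = V * Matrix.diagonal e := by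
    rw [hY, mul_assoc, Matrix.mem_unitaryGroup_iff'.mp hV, mul_one]
  have hXv : T X v = d i • v := by
    calc T X v = T (X * U) s := by
          rw [hv, ← ContinuousLinearMap.mul_apply, ← _root_.map_mul]
    _ = T U (T (Matrix.diagonal d) s) := by
          rw [hXU, _root_.map_mul, ContinuousLinearMap.mul_apply]
    _ = d i • v := by rw [hdiag, _root_.map_smul, hv]
  have hYv : T Y v = T V (T (Matrix.diagonal e) w) := by
    calc T Y v = T Y (T V w) := by rw [← hvw]
    _ = T (Y * V) w := by rw [← ContinuousLinearMap.mul_apply, ← _root_.map_mul]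
    _ = T V (T (Matrix.diagonal e) w) := by
          rw [hYV, _root_.map_mul, ContinuousLinearMap.mul_apply]
  set z : EuclideanSpace ℂ m := d i • w - T (Matrix.diagonal e) w with hz
  have hkey : T (X - Y) v = T V z := by
    rw [_root_.map_sub, ContinuousLinearMap.sub_apply, hXv, hYv, hz, _root_.map_sub, _root_.map_smul, ← hvw]
  have h1 : ‖z‖ ≤ ‖X - Y‖ := by
    calc ‖z‖ = ‖T V z‖ := (T_norm_map hV z).symm
    _ = ‖T (X - Y) v‖ := by rw [hkey]
    _ ≤ ‖T (X - Y)‖ * ‖v‖ := (T (X - Y)).le_opNorm v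
    _ = ‖X - Y‖ := by rw [hsv, mul_one, ← T_norm]
  -- components of `z`
  have hzj : ∀ j, z j = (d i - e j) * w j := by
    intro j
    have h2 := congrFun (Matrix.ofLp_toEuclideanCLM (𝕜 := ℂ)
      (Matrix.diagonal e) w) j
    have h3 : (T (Matrix.diagonal e) w) j = e j * w j := by
      exact h2.trans (Matrix.mulVec_diagonal _ _ _)
    rw [hz]
    simp only [PiLp.sub_apply, PiLp.smul_apply, smul_eq_mul, h3]
    ring
  have hwsum : ∑ j, ‖w j‖ ^ 2 = 1 := by
    have h4 := EuclideanSpace.norm_eq w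
    rw [hwv] at h4
    have h5 : (0 : ℝ) ≤ ∑ j, ‖w j‖ ^ 2 :=
      Finset.sum_nonneg fun j _ => sq_nonneg _
    have h6 : Real.sqrt (∑ j, ‖w j‖ ^ 2) = 1 := h4.symm
    calc ∑ j, ‖w j‖ ^ 2 = Real.sqrt (∑ j, ‖w j‖ ^ 2) ^ 2 := (Real.sq_sqrt h5).symm
    _ = 1 := by rw [h6]; norm_num
  have h6 : ‖d i - e j₀‖ ≤ ‖z‖ := by
    rw [EuclideanSpace.norm_eq]
    have h7 : ‖d i - e j₀‖ ^ 2 ≤ ∑ j, ‖z j‖ ^ 2 := by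
      calc ‖d i - e j₀‖ ^ 2
          = ∑ j, ‖d i - e j₀‖ ^ 2 * ‖w j‖ ^ 2 := by
            rw [← Finset.mul_sum, hwsum, mul_one]
      _ ≤ ∑ j, ‖z j‖ ^ 2 := by
            refine Finset.sum_le_sum fun j _ => ?_
            rw [hzj j, norm_mul]
            have h8 := hj₀ j (Finset.mem_univ j)
            have h9 : ‖d i - e j‖ = ‖d i - e j‖ := rfl
            rw [mul_pow, h9]
            have h10 : ‖d i - e j₀‖ ^ 2 ≤ ‖d i - e j‖ ^ 2 :=
              pow_le_pow_left₀ (norm_nonneg _) h8 2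
            exact mul_le_mul_of_nonneg_right h10 (sq_nonneg _)
    calc ‖d i - e j₀‖ = Real.sqrt (‖d i - e j₀‖ ^ 2) :=
          (Real.sqrt_sq (norm_nonneg _)).symm
    _ ≤ Real.sqrt (∑ j, ‖z j‖ ^ 2) := Real.sqrt_le_sqrt h7
  exact h6.trans h1

/-- `|1 - e^{iθ}| = 2|sin(θ/2)|`. -/
lemma abs_exp_mul_I_sub_one (θ : ℝ) :
    ‖Complex.exp (θ * Complex.I) - 1‖ = 2 * |Real.sin (θ / 2)| := by
  have hre : (Complex.exp (θ * Complex.I) - 1).re = Real.cos θ - 1 := by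
    simp [Complex.exp_ofReal_mul_I_re]
  have him : (Complex.exp (θ * Complex.I) - 1).im = Real.sin θ := by
    simp [Complex.exp_ofReal_mul_I_im]
  have h1 : ‖Complex.exp (θ * Complex.I) - 1‖ ^ 2 = 2 - 2 * Real.cos θ := by
    rw [Complex.sq_norm, Complex.normSq_apply, hre, him]
    nlinarith [Real.sin_sq_add_cos_sq θ]
  have h2 : (2 * |Real.sin (θ / 2)|) ^ 2 = 2 - 2 * Real.cos θ := by
    rw [Real.abs_sin_half]
    have h3 : (0:ℝ) ≤ (1 - Real.cos θ) / 2 := by nlinarith [Real.cos_le_one θ]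
    rw [mul_pow, Real.sq_sqrt h3]
    ring
  have h4 : (0:ℝ) ≤ 2 * |Real.sin (θ / 2)| := by positivity
  nlinarith [norm_nonneg (Complex.exp (θ * Complex.I) - 1)]

/-- Angular closeness from closeness of the unit-circle points. -/
lemma angle_close {a b ε : ℝ} (ha : |a| ≤ Real.pi / 2)
    (hb : b ∈ Set.Ioc (-Real.pi) Real.pi) (hε : ε ≤ 1 / 2)
    (h : ‖Complex.exp (-(Complex.I * a)) - Complex.exp (-(Complex.I * b))‖ ≤ ε) :
    |a - b| ≤ Real.pi / 2 * ε := by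
  have hπ := Real.pi_pos
  set t := b - a with ht
  have hfact : Complex.exp (-(Complex.I * a)) - Complex.exp (-(Complex.I * b)) =
      Complex.exp (-(Complex.I * b)) * (Complex.exp ((t : ℝ) * Complex.I) - 1) := by
    have harg : -(Complex.I * (a : ℂ)) = -(Complex.I * b) + (↑t : ℂ) * Complex.I := by
      rw [ht]; push_cast; ring
    rw [mul_sub, mul_one, ← Complex.exp_add, ← harg]
  have habs1 : ‖Complex.exp (-(Complex.I * (b:ℂ)))‖ = 1 := by
    rw [Complex.norm_exp]
    simp
  have hkey : 2 * |Real.sin (t / 2)| ≤ ε := by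
    rw [hfact, norm_mul, habs1, one_mul, abs_exp_mul_I_sub_one] at h
    exact h
  -- |t| ≤ 3π/2
  have hb1 := hb.1
  have hb2 := hb.2
  have ha1 : -(Real.pi / 2) ≤ a := by
    have := abs_le.mp ha; linarith [this.1]
  have ha2 : a ≤ Real.pi / 2 := (abs_le.mp ha).2
  have htb : |t| ≤ 3 * Real.pi / 2 := by
    rw [abs_le]; constructor <;> [linarith; linarith]
  have hsin_abs : |Real.sin (t / 2)| = Real.sin (|t| / 2) := by
    rcases le_or_gt 0 t with h0 | h0
    · rw [abs_of_nonneg h0, abs_of_nonneg]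
      exact Real.sin_nonneg_of_nonneg_of_le_pi (by linarith) (by linarith)
    · rw [abs_of_neg h0]
      rw [show t / 2 = -(-t / 2) by ring, Real.sin_neg, abs_neg, abs_of_nonneg]
      exact Real.sin_nonneg_of_nonneg_of_le_pi (by linarith) (by linarith)
  rcases le_or_gt (|t|) Real.pi with hcase | hcase
  · -- small case: use concavity bound 2/π x ≤ sin x
    have h5 : 2 / Real.pi * (|t| / 2) ≤ Real.sin (|t| / 2) :=
      Real.mul_le_sin (by positivity) (by linarith)
    have h6 : 2 * Real.sin (|t| / 2) ≤ ε := by rw [← hsin_abs]; exact hkey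
    have h9 : 2 / Real.pi * |t| ≤ ε := by
      have h10 : 2 * (2 / Real.pi * (|t| / 2)) = 2 / Real.pi * |t| := by ring
      linarith
    have h8 : |t| ≤ Real.pi / 2 * ε := by
      calc |t| = Real.pi / 2 * (2 / Real.pi * |t|) := by
            field_simp
      _ ≤ Real.pi / 2 * ε := mul_le_mul_of_nonneg_left h9 (by positivity)
    rw [abs_sub_comm]
    exact h8
  · -- impossible case: 2|sin(t/2)| ≥ 1 > 1/2 ≥ ε
    exfalso
    have h10 : |t| / 2 ≤ 3 * Real.pi / 4 := by linarith
    have h11 : Real.pi - |t| / 2 ≤ Real.pi / 2 := by linarith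
    have h12 : Real.pi / 4 ≤ Real.pi - |t| / 2 := by linarith
    have h13 : 2 / Real.pi * (Real.pi - |t| / 2) ≤ Real.sin (Real.pi - |t| / 2) :=
      Real.mul_le_sin (by linarith) h11
    have h14 : Real.sin (Real.pi - |t| / 2) = Real.sin (|t| / 2) := Real.sin_pi_sub _
    have hhalf : 2 / Real.pi * (Real.pi / 4) = 1 / 2 := by
      rw [div_mul_div_comm, mul_comm, mul_div_mul_left _ _ (ne_of_gt hπ)]
      norm_num
    have h15 : (1:ℝ) / 2 ≤ Real.sin (|t| / 2) := by
      rw [← h14, ← hhalf]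
      exact le_trans (mul_le_mul_of_nonneg_left h12 (by positivity)) h13
    rw [hsin_abs] at hkey
    linarith

/-- Exponential of a scalar multiple of a Hermitian matrix, diagonalized. -/
lemma exp_hermitian {A : Matrix m m ℂ} (hA : A.IsHermitian) (c : ℂ) :
    NormedSpace.exp (c • A) = (hA.eigenvectorUnitary : Matrix m m ℂ) *
      Matrix.diagonal (fun i => Complex.exp (c * hA.eigenvalues i)) *
      star (hA.eigenvectorUnitary : Matrix m m ℂ) := by
  set U : Matrix m m ℂ := (hA.eigenvectorUnitary : Matrix m m ℂ) with hU
  have hUmem : U ∈ Matrix.unitaryGroup m ℂ := hA.eigenvectorUnitary.2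
  have hUinv : U⁻¹ = star U :=
    Matrix.inv_eq_left_inv (Matrix.mem_unitaryGroup_iff'.mp hUmem)
  have hUunit : IsUnit U :=
    ⟨⟨U, star U, Matrix.mem_unitaryGroup_iff.mp hUmem,
      Matrix.mem_unitaryGroup_iff'.mp hUmem⟩, rfl⟩
  have hsmul : c • A = U * (c • Matrix.diagonal (RCLike.ofReal ∘ hA.eigenvalues)) * U⁻¹ := by
    conv_lhs => rw [hA.spectral_theorem]
    rw [Unitary.conjStarAlgAut_apply]
    rw [mul_smul_comm, smul_mul_assoc, hUinv]
  rw [hsmul, Matrix.exp_conj U _ hUunit, hUinv]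
  have hD : NormedSpace.exp (c • Matrix.diagonal (RCLike.ofReal ∘ hA.eigenvalues)) =
      Matrix.diagonal (fun i => Complex.exp (c * hA.eigenvalues i)) := by
    rw [← Matrix.diagonal_smul, Matrix.exp_diagonal, Pi.exp_def]
    congr 1
    funext i
    rw [← Complex.exp_eq_exp_ℂ]
    simp only [Pi.smul_apply, Function.comp_apply, smul_eq_mul]
    norm_num [RCLike.ofReal]
  rw [hD]

end TrotterAux

open TrotterAux

/-- Trotter error on the ground state energy: if `S δ` is a unitary-valued function with
`‖exp(-iδH) - S δ‖ ≤ C δ^{p+1}` on `[0, δ₀]`, and `S δ = exp (-iδ H̃(δ))` for an effective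
Hermitian `H̃(δ)` whose spectrum avoids wraparound (`δ · spec(H̃ δ) ⊆ (-π, π]`), then for all
sufficiently small `δ > 0` the smallest eigenvalues satisfy
`|λ_min(H) - λ_min(H̃ δ)| ≤ C' δ^p`. -/
theorem trotter_ground_state_bias {n : ℕ} (H : Matrix (Fin (n + 1)) (Fin (n + 1)) ℂ)
    (hH : H.IsHermitian) (p : ℕ) (C δ₀ : ℝ) (hC : 0 < C) (hδ₀ : 0 < δ₀)
    (S : ℝ → Matrix (Fin (n + 1)) (Fin (n + 1)) ℂ)
    (hSU : ∀ δ, S δ ∈ Matrix.unitaryGroup (Fin (n + 1)) ℂ)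
    (hApprox : ∀ δ ∈ Set.Icc (0 : ℝ) δ₀,
      ‖NormedSpace.exp ((-(Complex.I * (δ : ℂ))) • H) - S δ‖ ≤ C * δ ^ (p + 1))
    (Ht : ℝ → Matrix (Fin (n + 1)) (Fin (n + 1)) ℂ) (hHt : ∀ δ, (Ht δ).IsHermitian)
    (hS : ∀ δ ∈ Set.Ioc (0 : ℝ) δ₀,
      S δ = NormedSpace.exp ((-(Complex.I * (δ : ℂ))) • Ht δ))
    (hspec : ∀ δ ∈ Set.Ioc (0 : ℝ) δ₀, ∀ i,
      δ * (hHt δ).eigenvalues i ∈ Set.Ioc (-Real.pi) Real.pi) :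
    ∃ C' > (0 : ℝ), ∃ δ₁ ∈ Set.Ioc (0 : ℝ) δ₀, ∀ δ ∈ Set.Ioc (0 : ℝ) δ₁,
      |Finset.univ.inf' Finset.univ_nonempty hH.eigenvalues -
          Finset.univ.inf' Finset.univ_nonempty (hHt δ).eigenvalues| ≤ C' * δ ^ p := by
  classical
  have hπ := Real.pi_pos
  set α := hH.eigenvalues with hα
  set M := Finset.univ.sup' Finset.univ_nonempty (fun i => |α i|) with hMdef
  have hM0 : (0:ℝ) ≤ M :=
    le_trans (abs_nonneg (α 0)) (Finset.le_sup' (fun i => |α i|) (Finset.mem_univ (0 : Fin (n+1))))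
  set δ₁ := min δ₀ (min (1 / (2 * C + 2)) (Real.pi / (2 * (M + 1)))) with hδ₁def
  have hδ₁pos : 0 < δ₁ := lt_min hδ₀ (lt_min (by positivity) (by positivity))
  refine ⟨Real.pi / 2 * C, by positivity, δ₁, ⟨hδ₁pos, min_le_left _ _⟩, ?_⟩
  rintro δ ⟨hδpos, hδle⟩
  have hδδ₀ : δ ∈ Set.Ioc (0:ℝ) δ₀ := ⟨hδpos, le_trans hδle (min_le_left _ _)⟩
  set β := (hHt δ).eigenvalues with hβ
  have hδ1 : δ ≤ 1 / (2 * C + 2) :=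
    le_trans hδle (le_trans (min_le_right _ _) (min_le_left _ _))
  have hδπ : δ ≤ Real.pi / (2 * (M + 1)) :=
    le_trans hδle (le_trans (min_le_right _ _) (min_le_right _ _))
  have hδle1 : δ ≤ 1 := by
    have h1 : 1 / (2 * C + 2) ≤ 1 := by
      rw [div_le_one (by positivity)]; linarith
    linarith
  have hεhalf : C * δ ^ (p + 1) ≤ 1 / 2 := by
    have h1 : δ ^ (p + 1) ≤ δ := pow_le_of_le_one hδpos.le hδle1 (Nat.succ_ne_zero p)
    have h2 : C * (1 / (2 * C + 2)) ≤ 1 / 2 := by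
      rw [mul_one_div, div_le_div_iff₀ (by positivity) (by norm_num)]
      linarith
    nlinarith
  -- diagonalized forms
  set U : Matrix (Fin (n+1)) (Fin (n+1)) ℂ := (hH.eigenvectorUnitary : Matrix (Fin (n+1)) (Fin (n+1)) ℂ) with hUdef
  set V : Matrix (Fin (n+1)) (Fin (n+1)) ℂ := ((hHt δ).eigenvectorUnitary : Matrix (Fin (n+1)) (Fin (n+1)) ℂ) with hVdef
  have hUmem : U ∈ Matrix.unitaryGroup (Fin (n+1)) ℂ := hH.eigenvectorUnitary.2
  have hVmem : V ∈ Matrix.unitaryGroup (Fin (n+1)) ℂ := (hHt δ).eigenvectorUnitary.2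
  set d : Fin (n+1) → ℂ := fun i => Complex.exp ((-(Complex.I * δ)) * α i) with hd
  set e : Fin (n+1) → ℂ := fun j => Complex.exp ((-(Complex.I * δ)) * β j) with he
  have hexpH : NormedSpace.exp ((-(Complex.I * (δ:ℂ))) • H) =
      U * Matrix.diagonal d * star U := exp_hermitian hH _
  have hexpHt : NormedSpace.exp ((-(Complex.I * (δ:ℂ))) • Ht δ) =
      V * Matrix.diagonal e * star V := exp_hermitian (hHt δ) _
  have hnorm : ‖U * Matrix.diagonal d * star U - V * Matrix.diagonal e * star V‖ ≤
      C * δ ^ (p + 1) := by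
    rw [← hexpH, ← hexpHt, ← hS δ hδδ₀]
    exact hApprox δ ⟨hδpos.le, hδδ₀.2⟩
  -- from phase matching to eigenvalue matching
  have key : ∀ i j, ‖d i - e j‖ ≤ C * δ ^ (p + 1) →
      |α i - β j| ≤ (Real.pi / 2 * C) * δ ^ p := by
    intro i j habs
    have ha : |δ * α i| ≤ Real.pi / 2 := by
      rw [abs_mul, abs_of_nonneg hδpos.le]
      have h1 : |α i| ≤ M := Finset.le_sup' (fun i => |α i|) (Finset.mem_univ i)
      calc δ * |α i| ≤ (Real.pi / (2 * (M + 1))) * (M + 1) :=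
            mul_le_mul hδπ (by linarith) (abs_nonneg _) (by positivity)
      _ = Real.pi / 2 := by field_simp
    have hb := hspec δ hδδ₀ j
    have habs' : ‖Complex.exp (-(Complex.I * (↑(δ * α i) : ℂ))) -
        Complex.exp (-(Complex.I * (↑(δ * β j) : ℂ)))‖ ≤ C * δ ^ (p + 1) := by
      have : (-(Complex.I * (↑(δ * α i) : ℂ))) = (-(Complex.I * δ)) * α i := by
        push_cast; ring
      rw [this]
      have : (-(Complex.I * (↑(δ * β j) : ℂ))) = (-(Complex.I * δ)) * β j := by
        push_cast; ring
      rw [this]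
      exact habs
    have hangle : |δ * α i - δ * β j| ≤ Real.pi / 2 * (C * δ ^ (p + 1)) :=
      angle_close ha hb hεhalf habs'
    rw [← mul_sub, abs_mul, abs_of_nonneg hδpos.le] at hangle
    have h2 : δ * |α i - β j| ≤ δ * ((Real.pi / 2 * C) * δ ^ p) := by
      calc δ * |α i - β j| ≤ Real.pi / 2 * (C * δ ^ (p + 1)) := hangle
      _ = δ * ((Real.pi / 2 * C) * δ ^ p) := by ring
    exact le_of_mul_le_mul_left h2 hδpos
  have hmatch1 : ∀ i, ∃ j, |α i - β j| ≤ (Real.pi / 2 * C) * δ ^ p := by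
    intro i
    obtain ⟨j, hj⟩ := phase_match hUmem hVmem d e i
    exact ⟨j, key i j (hj.trans hnorm)⟩
  have hmatch2 : ∀ j, ∃ i, |α i - β j| ≤ (Real.pi / 2 * C) * δ ^ p := by
    intro j
    obtain ⟨i, hi⟩ := phase_match hVmem hUmem e d j
    refine ⟨i, key i j ?_⟩
    have h3 : ‖d i - e j‖ = ‖e j - d i‖ :=
      norm_sub_rev _ _
    rw [h3]
    refine hi.trans ?_
    rw [norm_sub_rev]
    exact hnorm
  -- compare the minima
  obtain ⟨i₀, -, hi₀⟩ := Finset.exists_mem_eq_inf' Finset.univ_nonempty α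
  obtain ⟨j₁, -, hj₁⟩ := Finset.exists_mem_eq_inf' Finset.univ_nonempty β
  rw [abs_sub_le_iff]
  constructor
  · obtain ⟨i, hi⟩ := hmatch2 j₁
    have h4 : Finset.univ.inf' Finset.univ_nonempty α ≤ α i :=
      Finset.inf'_le _ (Finset.mem_univ i)
    have h5 := abs_le.mp hi
    rw [hj₁]
    linarith [h5.2]
  · obtain ⟨j, hj⟩ := hmatch1 i₀
    have h4 : Finset.univ.inf' Finset.univ_nonempty β ≤ β j :=
      Finset.inf'_le _ (Finset.mem_univ j)
    have h5 := abs_le.mp hj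
    rw [hi₀]
    linarith [h5.1]
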